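/- Let M be a minimally vertically 4-connected matroid with at least six elements that has no 4-element cocircuit and no 5-element cocircuit containing a triangle. Then there is no element a of M such that M \ a has an exact vertical j-separation for some j ∈ {1,2}. -/

import Mathlib

open Set Matroid

universe u

variable {α : Type u}

/-- The rank of a set `X` in a matroid `M`: the supremum of the cardinalities of the
independent subsets of `X`. -/
noncomputable def mrk (M : Matroid α) (X : Set α) : ℕ∞ :=
  ⨆ I ∈ {I : Set α | M.Indep I ∧ I ⊆ X}, I.encard

/-- The rank `r(M)` of a matroid `M`. -/
noncomputable def mrank (M : Matroid α) : ℕ∞ := mrk M M.E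

/-- The connectivity function `λ_M(X) = r(X) + r(E(M) - X) - r(M)`. -/
noncomputable def lam (M : Matroid α) (X : Set α) : ℕ∞ :=
  mrk M X + mrk M (M.E \ X) - mrank M

/-- The deletion `M \ D` of a set of elements `D` from `M`. -/
def mdel (M : Matroid α) (D : Set α) : Matroid α := M ↾ (M.E \ D)

/-- A circuit of a matroid: a minimal dependent set. -/
def MCircuit (M : Matroid α) (C : Set α) : Prop := M.Dep C ∧ ∀ D, D ⊂ C → M.Indep D

/-- A cocircuit of a matroid: a circuit of the dual matroid. -/
def MCocircuit (M : Matroid α) (C : Set α) : Prop := MCircuit M✶ C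

/-- A triangle: a 3-element circuit. -/
def IsTriangle (M : Matroid α) (T : Set α) : Prop := MCircuit M T ∧ T.encard = 3

/-- `(X, Y)` is a vertical `j`-separation of `M`: a partition of `E(M)` with
`λ_M(X) < j` and `min {r(X), r(Y)} ≥ j`. -/
def IsVSep (M : Matroid α) (j : ℕ) (X Y : Set α) : Prop :=
  X ∪ Y = M.E ∧ Disjoint X Y ∧ lam M X < (j : ℕ∞) ∧
    (j : ℕ∞) ≤ mrk M X ∧ (j : ℕ∞) ≤ mrk M Y

/-- An exact vertical `j`-separation: one with `λ_M(X) = j - 1`. -/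
def IsExactVSep (M : Matroid α) (j : ℕ) (X Y : Set α) : Prop :=
  IsVSep M j X Y ∧ lam M X = (j : ℕ∞) - 1

/-- `M` is vertically `k`-connected: it has no vertical `j`-separation for a
positive integer `j < k`. -/
def VertConn (M : Matroid α) (k : ℕ) : Prop :=
  ∀ j X Y, 0 < j → j < k → ¬ IsVSep M j X Y

/-- `(X, Y)` is a (Tutte) `j`-separation of `M`. -/
def IsSep (M : Matroid α) (j : ℕ) (X Y : Set α) : Prop :=
  X ∪ Y = M.E ∧ Disjoint X Y ∧ lam M X < (j : ℕ∞) ∧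
    (j : ℕ∞) ≤ X.encard ∧ (j : ℕ∞) ≤ Y.encard

/-- `M` is (Tutte) `k`-connected. -/
def TConn (M : Matroid α) (k : ℕ) : Prop :=
  ∀ j X Y, 0 < j → j < k → ¬ IsSep M j X Y

/-- `M` is minimally vertically 4-connected. -/
def MinVertConn4 (M : Matroid α) : Prop :=
  VertConn M 4 ∧ ∀ e ∈ M.E, ¬ VertConn (mdel M {e}) 4

/-- `M` is a simple matroid: every subset of the ground set with at most two
elements is independent (no loops and no parallel pairs). -/
def MSimple (M : Matroid α) : Prop := ∀ S ⊆ M.E, S.encard ≤ 2 → M.Indep S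

/-- `M` has a restriction isomorphic to `U_{2,4}`: a 4-element subset of the ground set
of rank 2, all of whose subsets with at most 2 elements are independent. -/
def HasU24Restriction (M : Matroid α) : Prop :=
  ∃ X ⊆ M.E, X.encard = 4 ∧ mrk M X = 2 ∧ ∀ S ⊆ X, S.encard ≤ 2 → M.Indep S

/-- The restriction `M|X` is isomorphic to `U_{2,4}`. -/
def RestrIsoU24 (M : Matroid α) (X : Set α) : Prop :=
  X ⊆ M.E ∧ X.encard = 4 ∧ mrk M X = 2 ∧ ∀ S ⊆ X, S.encard ≤ 2 → M.Indep S

/-- The restriction `M|C` is isomorphic to `U_{2,k} ⊕ U_{2,2}`: `C` is the disjoint union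
of a `k`-element rank-2 set `L` containing no loops or parallel pairs (a copy of `U_{2,k}`)
and a 2-element independent set `P` (a copy of `U_{2,2}`), with `r(C) = r(L) + r(P) = 4`,
so that the restriction is the direct sum of the two pieces. -/
def RestrIsoLinePlusPair (M : Matroid α) (C : Set α) (k : ℕ) : Prop :=
  ∃ L P, C = L ∪ P ∧ Disjoint L P ∧ L.encard = (k : ℕ∞) ∧ P.encard = 2 ∧
    M.Indep P ∧ mrk M L = 2 ∧ (∀ S ⊆ L, S.encard ≤ 2 → M.Indep S) ∧ mrk M C = 4

/-- The restriction `M|X` is isomorphic to the 2-sum `U_{2,4} ⊕₂ U_{2,4}`: `X` is the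
disjoint union of two 3-element circuits `T₁` and `T₂`, and the circuits of `M` contained
in `X` (i.e. the circuits of `M|X`) are exactly `T₁`, `T₂`, and the unions `P₁ ∪ P₂` of
2-element subsets `P₁ ⊆ T₁` and `P₂ ⊆ T₂`. -/
def RestrIsoTwoSumU24U24 (M : Matroid α) (X : Set α) : Prop :=
  X ⊆ M.E ∧ ∃ T₁ T₂ : Set α, Disjoint T₁ T₂ ∧ X = T₁ ∪ T₂ ∧
    T₁.encard = 3 ∧ T₂.encard = 3 ∧
    ∀ C ⊆ X, (MCircuit M C ↔ (C = T₁ ∨ C = T₂ ∨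
      ∃ P₁ P₂, P₁ ⊆ T₁ ∧ P₂ ⊆ T₂ ∧ P₁.encard = 2 ∧ P₂.encard = 2 ∧ C = P₁ ∪ P₂))

/-- The columns of the `GF(3)`-matrix representing `N₉`. -/
def N9Cols : Fin 9 → Fin 4 → ZMod 3 :=
  ![![1, 0, 0, 0], ![0, 1, 0, 0], ![0, 0, 1, 0], ![0, 0, 0, 1], ![0, 1, 1, -1],
    ![1, 0, 1, 1], ![1, 1, 0, 1], ![-1, 1, 1, 0], ![1, -1, 1, -1]]

/-- `M` is isomorphic to `N₉`, the 9-element rank-4 matroid represented over `GF(3)`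
by the matrix with columns `N9Cols`. -/
def IsoN9 (M : Matroid α) : Prop :=
  ∃ φ : α → Fin 9, Set.BijOn φ M.E Set.univ ∧
    ∀ I ⊆ M.E, (M.Indep I ↔ LinearIndependent (ZMod 3) fun x : I => N9Cols (φ x.1))

/-- `M` is binary: representable over the two-element field `GF(2)`, i.e. there is a
map from the ground set to a `GF(2)`-vector space under which independence in `M`
coincides with linear independence. -/
def IsBinary (M : Matroid α) : Prop :=
  ∃ (ι : Type u) (φ : α → ι → ZMod 2),
    ∀ I ⊆ M.E, (M.Indep I ↔ LinearIndependent (ZMod 2) fun x : I => φ x.1)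

/-- `M` is a uniform matroid, i.e. isomorphic to `U_{m,n}` for some `m` and `n`:
the ground set has `n` elements and a subset of the ground set is independent
exactly when it has at most `m` elements. -/
def IsUniform (M : Matroid α) : Prop :=
  ∃ m n : ℕ, M.E.encard = (n : ℕ∞) ∧ ∀ I ⊆ M.E, (M.Indep I ↔ I.encard ≤ (m : ℕ∞))

theorem mrk_eq_of_basis' {M : Matroid α} {I X : Set α} (hI : M.IsBasis' I X) :
    mrk M X = I.encard := by
  apply le_antisymm
  · refine iSup₂_le fun J hJ => ?_
    obtain ⟨J', hJ', hJJ'⟩ := hJ.1.subset_isBasis'_of_subset hJ.2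
    exact (encard_le_encard hJJ').trans_eq (hJ'.encard_eq_encard hI)
  · exact le_iSup₂ (f := fun I (_ : I ∈ {I : Set α | M.Indep I ∧ I ⊆ X}) => I.encard) I
      ⟨hI.indep, hI.subset⟩

theorem indep_le_mrk {M : Matroid α} {I X : Set α} (hI : M.Indep I) (hIX : I ⊆ X) :
    I.encard ≤ mrk M X :=
  le_iSup₂ (f := fun I (_ : I ∈ {I : Set α | M.Indep I ∧ I ⊆ X}) => I.encard) I ⟨hI, hIX⟩

theorem mrk_mono (M : Matroid α) {X Y : Set α} (h : X ⊆ Y) : mrk M X ≤ mrk M Y :=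
  iSup₂_le fun J hJ => indep_le_mrk hJ.1 (hJ.2.trans h)

theorem mrk_le_encard (M : Matroid α) (X : Set α) : mrk M X ≤ X.encard :=
  iSup₂_le fun J hJ => encard_le_encard hJ.2

theorem mrk_closure_eq (M : Matroid α) (X : Set α) : mrk M (M.closure X) = mrk M X := by
  obtain ⟨I, hI⟩ := M.exists_isBasis' X
  rw [mrk_eq_of_basis' hI, mrk_eq_of_basis' hI.isBasis_closure_right.isBasis']

theorem mrk_inter_ground (M : Matroid α) (X : Set α) : mrk M (X ∩ M.E) = mrk M X := by
  refine le_antisymm (mrk_mono M inter_subset_left)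
    (iSup₂_le fun J hJ => indep_le_mrk hJ.1 (subset_inter hJ.2 hJ.1.subset_ground))

theorem mrk_union_le (M : Matroid α) (X Y : Set α) :
    mrk M (X ∪ Y) ≤ mrk M X + mrk M Y := by
  obtain ⟨I, hI⟩ := M.exists_isBasis' X
  obtain ⟨J, hJ⟩ := M.exists_isBasis' Y
  have h1 : (X ∪ Y) ∩ M.E ⊆ M.closure (I ∪ J) := by
    rw [union_inter_distrib_right]
    refine union_subset ?_ ?_
    · exact hI.isBasis_inter_ground.subset_closure.trans
        (M.closure_subset_closure subset_union_left)
    · exact hJ.isBasis_inter_ground.subset_closure.trans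
        (M.closure_subset_closure subset_union_right)
  rw [← mrk_inter_ground M (X ∪ Y)]
  calc mrk M ((X ∪ Y) ∩ M.E) ≤ mrk M (M.closure (I ∪ J)) := mrk_mono M h1
    _ = mrk M (I ∪ J) := mrk_closure_eq M _
    _ ≤ (I ∪ J).encard := mrk_le_encard M _
    _ ≤ I.encard + J.encard := encard_union_le I J
    _ ≤ mrk M X + mrk M Y := by
        rw [mrk_eq_of_basis' hI, mrk_eq_of_basis' hJ]

theorem mrk_insert_le (M : Matroid α) (e : α) (X : Set α) :
    mrk M (insert e X) ≤ mrk M X + 1 := by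
  have := mrk_union_le M X {e}
  rw [union_singleton] at this
  exact this.trans (add_le_add_right ((mrk_le_encard M _).trans (by simp)) _)

theorem mrk_insert_of_mem_closure {M : Matroid α} {e : α} {X : Set α}
    (he : e ∈ M.closure X) : mrk M (insert e X) = mrk M X := by
  rw [← mrk_closure_eq M (insert e X), closure_insert_eq_of_mem_closure he, mrk_closure_eq]

theorem mrk_insert_of_not_mem_closure {M : Matroid α} {e : α} {X : Set α}
    (heE : e ∈ M.E) (he : e ∉ M.closure X) : mrk M (insert e X) = mrk M X + 1 := by
  obtain ⟨I, hI⟩ := M.exists_isBasis' X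
  have hclI : M.closure I = M.closure X := hI.closure_eq_closure
  have heI : e ∉ I := fun h => he (hclI ▸ M.subset_closure I hI.indep.subset_ground h)
  have hind : M.Indep (insert e I) := by
    rw [hI.indep.insert_indep_iff_of_notMem heI]
    exact ⟨heE, hclI ▸ he⟩
  have hb : M.IsBasis (insert e I) ((insert e X) ∩ M.E) := by
    refine hind.isBasis_of_subset_of_subset_closure ?_ ?_
    · exact insert_subset (by simp [heE]) ((subset_inter hI.subset hI.indep.subset_ground).trans
        (inter_subset_inter_left _ (subset_insert e X)))
    · refine (fun x hx => ?_)
      rcases hx.1 with rfl | hxX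
      · exact M.mem_closure_of_mem (mem_insert x I) hind.subset_ground
      · have : x ∈ M.closure X := M.mem_closure_of_mem' hxX hx.2
        rw [← hclI] at this
        exact M.closure_subset_closure (subset_insert e I) this
  have : mrk M (insert e X) = (insert e I).encard := by
    rw [mrk_eq_of_basis' (isBasis'_iff_isBasis_inter_ground.2 hb)]
  rw [this, encard_insert_of_notMem heI, mrk_eq_of_basis' hI]

theorem mem_closure_of_mrk_insert_le {M : Matroid α} {e : α} {X : Set α}
    (heE : e ∈ M.E) (hfin : mrk M X ≠ ⊤) (h : mrk M (insert e X) ≤ mrk M X) :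
    e ∈ M.closure X := by
  by_contra hne
  rw [mrk_insert_of_not_mem_closure heE hne] at h
  exact absurd ((ENat.add_one_le_iff hfin).mp h) (lt_irrefl _)

theorem mrk_restrict (M : Matroid α) {X R : Set α} (hXR : X ⊆ R) :
    mrk (M ↾ R) X = mrk M X := by
  unfold mrk
  refine le_antisymm (iSup₂_le fun J hJ => ?_) (iSup₂_le fun J hJ => ?_)
  · exact le_iSup₂ (f := fun I (_ : I ∈ {I : Set α | M.Indep I ∧ I ⊆ X}) => I.encard) J
      ⟨(restrict_indep_iff.1 hJ.1).1, hJ.2⟩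
  · exact le_iSup₂ (f := fun I (_ : I ∈ {I : Set α | (M ↾ R).Indep I ∧ I ⊆ X}) => I.encard) J
      ⟨restrict_indep_iff.2 ⟨hJ.1, hJ.2.trans hXR⟩, hJ.2⟩

@[simp] theorem mrk_empty (M : Matroid α) : mrk M ∅ = 0 := by
  simpa using mrk_le_encard M ∅

theorem mrk_singleton_le (M : Matroid α) (x : α) : mrk M {x} ≤ 1 := by
  simpa using mrk_le_encard M {x}

theorem one_le_mrk_of_mrk_ne_zero {M : Matroid α} {X : Set α} (h : mrk M X ≠ 0) :
    1 ≤ mrk M X := ENat.one_le_iff_ne_zero.2 h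

theorem loop_mem_closure {M : Matroid α} {x : α} {X : Set α} (hx : x ∈ M.E)
    (h : mrk M {x} = 0) : x ∈ M.closure X := by
  have h0 : mrk M (insert x (∅ : Set α)) ≤ mrk M ∅ := by
    rw [insert_empty_eq, mrk_empty]
    exact h.le
  have := mem_closure_of_mrk_insert_le hx (by simp) h0
  exact M.closure_subset_closure (empty_subset X) this

theorem subset_closure_of_mrk_le {M : Matroid α} {U V : Set α} (hUV : U ⊆ V) (hV : V ⊆ M.E)
    (h : mrk M V ≤ mrk M U) (hfin : mrk M U ≠ ⊤) : V ⊆ M.closure U := by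
  intro z hz
  by_contra hzc
  have h1 : mrk M (insert z U) = mrk M U + 1 :=
    mrk_insert_of_not_mem_closure (hV hz) hzc
  have h2 : mrk M (insert z U) ≤ mrk M U := (mrk_mono M (insert_subset hz hUV)).trans h
  rw [h1] at h2
  exact absurd ((ENat.add_one_le_iff hfin).mp h2) (lt_irrefl _)

theorem closure_eq_ground_of_mrk_eq {M : Matroid α} {S : Set α} (hS : S ⊆ M.E)
    (h : mrk M S = mrk M M.E) (hfin : mrk M M.E ≠ ⊤) : M.closure S = M.E :=
  subset_antisymm (M.closure_subset_ground S)
    (subset_closure_of_mrk_le hS Subset.rfl h.ge (fun ht => hfin (h ▸ ht)))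

theorem cocirc_of_line {M : Matroid α} {S : Set α} (hS : S ⊆ M.E)
    (hrM : mrk M M.E = 3) (hr : mrk M S = 2) :
    MCircuit M✶ (M.E \ M.closure S) := by
  set L := M.closure S with hL
  have hLE : L ⊆ M.E := M.closure_subset_ground S
  have hLrk : mrk M L = 2 := by rw [hL, mrk_closure_eq, hr]
  have hclL : M.closure L = L := by rw [hL, closure_closure]
  constructor
  · rw [dep_iff]
    refine ⟨fun hind => ?_, by rw [dual_ground]; exact diff_subset⟩
    have hsp : M.Spanning L := by
      have := (coindep_iff_compl_spanning diff_subset).mp hind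
      rwa [diff_diff_cancel_left hLE] at this
    rw [spanning_iff_closure_eq, hclL] at hsp
    rw [← hsp] at hrM
    rw [hLrk] at hrM
    exact absurd hrM (by decide)
  · intro D hD
    obtain ⟨c, hcC, hcD⟩ := exists_of_ssubset hD
    have hDE : D ⊆ M.E := hD.subset.trans diff_subset
    have hLD : L ⊆ M.E \ D := subset_diff.2 ⟨hLE,
      disjoint_left.2 fun z hz hzD => (hD.subset hzD).2 hz⟩
    have hcE : c ∈ M.E := hcC.1
    have hcL : c ∉ M.closure L := by rw [hclL]; exact hcC.2
    have h3 : mrk M (M.E \ D) = mrk M M.E := by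
      refine le_antisymm (mrk_mono M diff_subset) ?_
      have h1 : mrk M (insert c L) = 3 := by
        rw [mrk_insert_of_not_mem_closure hcE hcL, hLrk]; rfl
      rw [hrM, ← h1]
      exact mrk_mono M (insert_subset ⟨hcE, hcD⟩ hLD)
    have hsp : M.Spanning (M.E \ D) := by
      rw [spanning_iff_closure_eq]
      exact closure_eq_ground_of_mrk_eq diff_subset h3 (by rw [hrM]; decide)
    exact (coindep_iff_compl_spanning hDE).mpr hsp

theorem no_fixfree_involution_odd (f : α → α) (n : ℕ) (hodd : Odd n) (S : Set α)
    (hfin : S.Finite) (hcard : S.ncard = n) (hmaps : ∀ x ∈ S, f x ∈ S)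
    (hinv : ∀ x ∈ S, f (f x) = x) (hne : ∀ x ∈ S, f x ≠ x) : False := by
  induction n using Nat.strong_induction_on generalizing S with
  | _ n ih =>
    have hn0 : n ≠ 0 := by rintro rfl; exact (by decide : ¬ Odd 0) hodd
    have hSne : S.Nonempty := by
      rw [← Set.ncard_pos hfin] at *; omega
    obtain ⟨x, hx⟩ := hSne
    have hfx : f x ∈ S := hmaps x hx
    have hxfx : x ≠ f x := fun h => hne x hx h.symm
    have hsub : {x, f x} ⊆ S := by rintro z (rfl | rfl) <;> assumption
    set S' := S \ {x, f x} with hS'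
    have hfin' : S'.Finite := hfin.diff
    have hcard' : S'.ncard = n - 2 := by
      rw [hS', Set.ncard_diff hsub ((Set.finite_singleton (f x)).insert x),
        Set.ncard_pair hxfx, hcard]
    have hmaps' : ∀ y ∈ S', f y ∈ S' := by
      rintro y ⟨hyS, hy2⟩
      refine ⟨hmaps y hyS, ?_⟩
      rintro (h | h)
      · have h1 : y = f x := by rw [← hinv y hyS, h]
        exact hy2 (by rw [h1]; right; rfl)
      · have h1 : y = x := by rw [← hinv y hyS, h, hinv x hx]
        exact hy2 (by rw [h1]; left; rfl)
    obtain ⟨k, rfl⟩ := hodd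
    rcases Nat.eq_zero_or_pos k with rfl | hk
    · obtain ⟨z, hz⟩ := Set.ncard_eq_one.mp (by simpa using hcard)
      have hxz : x = z := by rw [hz] at hx; simpa using hx
      have hfz : f x = z := by rw [hz] at hfx; simpa using hfx
      exact hne x hx (by rw [hfz, hxz])
    · refine ih (2 * k + 1 - 2) (by omega) (by
        obtain ⟨m, hm⟩ : ∃ m, k = m + 1 := ⟨k - 1, by omega⟩
        exact ⟨m, by omega⟩) S' hfin' hcard' hmaps'
        (fun y hy => hinv y hy.1) (fun y hy => hne y hy.1)

theorem compl_of_partition {E P Q : Set α} (hPQ : P ∪ Q = E) (hd : Disjoint P Q) :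
    E \ P = Q := by
  rw [← hPQ, union_diff_left, sdiff_eq_left]
  exact hd.symm

theorem enat_coe_sub (p q : ℕ) : ((p : ℕ∞) - (q : ℕ∞)) = ((p - q : ℕ) : ℕ∞) :=
  (ENat.coe_sub p q).symm

theorem lam_eq_coe {M : Matroid α} {P Q : Set α} {p q r : ℕ} (hc : M.E \ P = Q)
    (hp : mrk M P = p) (hq : mrk M Q = q) (hr : mrank M = r) :
    lam M P = ((p + q - r : ℕ) : ℕ∞) := by
  rw [lam, hc, hp, hq, hr, ← Nat.cast_add, enat_coe_sub]

theorem dich3 {M : Matroid α} (hM4 : VertConn M 4) (hrM : mrank M = 3) {P Q : Set α}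
    (hPQ : P ∪ Q = M.E) (hd : Disjoint P Q) {p q : ℕ} (hp : mrk M P = p) (hq : mrk M Q = q)
    (hp1 : 1 ≤ p) (hp2 : p ≤ 2) (hq1 : 1 ≤ q) (hq2 : q ≤ 2) : False := by
  have hr3 : mrank M = ((3 : ℕ) : ℕ∞) := by rw [hrM]; rfl
  have hlam : lam M P = ((p + q - 3 : ℕ) : ℕ∞) :=
    lam_eq_coe (compl_of_partition hPQ hd) hp hq hr3
  by_cases h22 : p = 2 ∧ q = 2
  · refine hM4 2 P Q (by norm_num) (by norm_num) ⟨hPQ, hd, ?_, ?_, ?_⟩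
    · rw [hlam, h22.1, h22.2]; decide
    · rw [hp, h22.1]
    · rw [hq, h22.2]
  · refine hM4 1 P Q (by norm_num) (by norm_num) ⟨hPQ, hd, ?_, ?_, ?_⟩
    · rw [hlam, show p + q - 3 = 0 by omega]; decide
    · rw [hp]; exact_mod_cast hp1
    · rw [hq]; exact_mod_cast hq1

theorem enat_ex {x : ℕ∞} (h : x ≠ ⊤) : ∃ n : ℕ, x = n := ⟨x.toNat, (ENat.coe_toNat h).symm⟩

theorem enat_ex_of_le {x : ℕ∞} {m : ℕ} (h : x ≤ (m : ℕ∞)) : ∃ n : ℕ, x = n ∧ n ≤ m := by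
  have hx : x ≠ ⊤ := by
    intro ht
    rw [ht] at h
    exact absurd h (by simp)
  obtain ⟨n, hn⟩ := enat_ex hx
  refine ⟨n, hn, ?_⟩
  rw [hn] at h
  exact_mod_cast h

theorem coe3 : ((3 : ℕ) : ℕ∞) = 3 := by norm_cast

theorem disj_insert_left {a : α} {s t : Set α} (ha : a ∉ t) (h : Disjoint s t) :
    Disjoint (insert a s) t := by
  rw [disjoint_left] at *
  rintro x (rfl | hx) hxt
  · exact ha hxt
  · exact h hx hxt

theorem disj_insert_right {a : α} {s t : Set α} (ha : a ∉ s) (h : Disjoint s t) :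
    Disjoint s (insert a t) := (disj_insert_left ha h.symm).symm

theorem rank3del {M : Matroid α} (hM4 : VertConn M 4) (hrM : mrank M = 3) {e : α}
    (he : e ∈ M.E) : mrk M (M.E \ {e}) = 3 := by
  have hins : insert e (M.E \ {e}) = M.E := by
    rw [insert_diff_singleton, insert_eq_self.2 he]
  have hub : mrk M (M.E \ {e}) ≤ 3 := hrM ▸ mrk_mono M diff_subset
  have hsum : (3 : ℕ∞) ≤ mrk M (M.E \ {e}) + mrk M {e} := by
    rw [← hrM]
    unfold mrank
    calc mrk M M.E = mrk M ((M.E \ {e}) ∪ {e}) := by rw [union_singleton, hins]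
      _ ≤ _ := mrk_union_le M _ _
  have hpart : (M.E \ {e}) ∪ {e} = M.E := by rw [union_singleton, hins]
  have hdisj : Disjoint (M.E \ {e}) {e} := disjoint_sdiff_left
  by_cases hloop : mrk M {e} = 0
  · rw [hloop, add_zero] at hsum
    exact le_antisymm hub hsum
  · have h1 : mrk M {e} = 1 :=
      le_antisymm (mrk_singleton_le M e) (one_le_mrk_of_mrk_ne_zero hloop)
    by_contra hne
    obtain ⟨n, hn, hn3⟩ := enat_ex_of_le (m := 3) (x := mrk M (M.E \ {e}))
      (by rw [coe3]; exact hub)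
    have hnne : n ≠ 3 := fun h => hne (by rw [hn, h, coe3])
    have hnz : n ≠ 0 := by
      intro h
      rw [hn, h, h1] at hsum
      exact absurd hsum (by decide)
    exact dich3 hM4 hrM hpart hdisj hn (by exact_mod_cast h1) (by omega) (by omega) le_rfl
      (by norm_num)

theorem sharp {M : Matroid α} (hM4 : VertConn M 4)
    (hmin : ∀ e ∈ M.E, ¬ VertConn (mdel M {e}) 4) (hrM : mrank M = 3) {e : α}
    (he : e ∈ M.E) :
    ∃ A B, A ∪ B = M.E \ {e} ∧ Disjoint A B ∧ mrk M A = 2 ∧ mrk M B = 2 ∧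
      e ∉ M.closure A ∧ e ∉ M.closure B := by
  have hdel := hmin e he
  rw [VertConn] at hdel; push_neg at hdel
  obtain ⟨j, A, B, hj0, hj4, hu, hd, hlt, hjA, hjB⟩ := hdel
  have hgr : (mdel M {e}).E = M.E \ {e} := rfl
  rw [hgr] at hu
  have hAs : A ⊆ M.E \ {e} := hu ▸ subset_union_left
  have hBs : B ⊆ M.E \ {e} := hu ▸ subset_union_right
  have hAE : A ⊆ M.E := hAs.trans diff_subset
  have hBE : B ⊆ M.E := hBs.trans diff_subset
  have hrA : mrk (mdel M {e}) A = mrk M A := mrk_restrict M hAs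
  have hrB : mrk (mdel M {e}) B = mrk M B := mrk_restrict M hBs
  have hrdel : mrk M (M.E \ {e}) = 3 := rank3del hM4 hrM he
  have hrk : mrank (mdel M {e}) = ((3:ℕ):ℕ∞) := by
    have h' : mrk (mdel M {e}) (M.E \ {e}) = mrk M (M.E \ {e}) := mrk_restrict M Subset.rfl
    unfold mrank
    rw [hgr, h', hrdel, coe3]
  have hcompl : (mdel M {e}).E \ A = B := by rw [hgr]; exact compl_of_partition hu hd
  obtain ⟨nA, hnA, hnA3⟩ := enat_ex_of_le (m := 3) (x := mrk M A)
    (by rw [coe3, ← hrM]; exact mrk_mono M hAE)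
  obtain ⟨nB, hnB, hnB3⟩ := enat_ex_of_le (m := 3) (x := mrk M B)
    (by rw [coe3, ← hrM]; exact mrk_mono M hBE)
  have hlam : lam (mdel M {e}) A = ((nA + nB - 3 : ℕ) : ℕ∞) := by
    rw [lam, hcompl, hrA, hrB, hnA, hnB, hrk, ← Nat.cast_add, enat_coe_sub]
  rw [hlam] at hlt
  have hlt' : nA + nB - 3 < j := by exact_mod_cast hlt
  have hjA' : j ≤ nA := by rw [hrA, hnA] at hjA; exact_mod_cast hjA
  have hjB' : j ≤ nB := by rw [hrB, hnB] at hjB; exact_mod_cast hjB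
  have hsum : 3 ≤ nA + nB := by
    have : mrk M (A ∪ B) ≤ mrk M A + mrk M B := mrk_union_le M A B
    rw [hu, hrdel, hnA, hnB] at this
    exact_mod_cast this
  have heAB : e ∉ A ∪ B := by rw [hu]; simp
  have heA : e ∉ A := fun h => heAB (Or.inl h)
  have heB : e ∉ B := fun h => heAB (Or.inr h)
  have hEins : insert e (M.E \ {e}) = M.E := by
    rw [insert_diff_singleton, insert_eq_self.2 he]
  have hinsA : insert e A ∪ B = M.E := by rw [insert_union, hu, hEins]
  have hinsB : A ∪ insert e B = M.E := by rw [union_insert, hu, hEins]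
  have hdA : Disjoint (insert e A) B := disj_insert_left heB hd
  have hdB : Disjoint A (insert e B) := disj_insert_right heA hd
  by_cases hcA : e ∈ M.closure A
  · exact absurd (dich3 hM4 hrM hinsA hdA
      (by rw [mrk_insert_of_mem_closure hcA, hnA]) hnB
      (by omega) (by omega) (by omega) (by omega)) not_false
  by_cases hcB : e ∈ M.closure B
  · exact absurd (dich3 hM4 hrM hinsB hdB hnA
      (by rw [mrk_insert_of_mem_closure hcB, hnB])
      (by omega) (by omega) (by omega) (by omega)) not_false
  have hkey : (nA = 2 ∧ nB = 2) ∨ (nA = 1 ∧ nB = 2) ∨ (nA = 2 ∧ nB = 1) := by omega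
  rcases hkey with ⟨h2A, h2B⟩ | ⟨h1A, h2B⟩ | ⟨h2A, h1B⟩
  · exact ⟨A, B, hu, hd, by rw [hnA, h2A]; norm_cast, by rw [hnB, h2B]; norm_cast, hcA, hcB⟩
  · refine absurd (dich3 hM4 hrM hinsA hdA (p := 2) (q := nB)
      (by rw [mrk_insert_of_not_mem_closure he hcA, hnA, h1A]; norm_cast) hnB
      (by omega) (by omega) (by omega) (by omega)) not_false
  · refine absurd (dich3 hM4 hrM hinsB hdB (p := nA) (q := 2) hnA
      (by rw [mrk_insert_of_not_mem_closure he hcB, hnB, h1B]; norm_cast)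
      (by omega) (by omega) (by omega) (by omega)) not_false

section RankThree

variable {M : Matroid α} (hM4 : VertConn M 4)
  (hmin : ∀ e ∈ M.E, ¬ VertConn (mdel M {e}) 4) (hrM : mrank M = 3)

include hM4 hmin hrM

theorem noloop {x : α} (hx : x ∈ M.E) : mrk M {x} = 1 := by
  obtain ⟨A, B, hu, hd, hA, hB, hcA, hcB⟩ := sharp hM4 hmin hrM hx
  refine le_antisymm (mrk_singleton_le M x) (one_le_mrk_of_mrk_ne_zero fun h0 => ?_)
  exact hcA (loop_mem_closure hx h0)

theorem nopara {x y : α} (hx : x ∈ M.E) (hy : y ∈ M.E) (hxy : x ≠ y) :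
    mrk M {x, y} = 2 := by
  obtain ⟨A, B, hu, hd, hA, hB, hcA, hcB⟩ := sharp hM4 hmin hrM hx
  have hyAB : y ∈ A ∪ B := by rw [hu]; exact ⟨hy, fun h => hxy (mem_singleton_iff.1 h).symm⟩
  have key : ∀ C : Set α, y ∈ C → x ∉ M.closure C → mrk M {x, y} = 2 := by
    intro C hyC hxC
    refine le_antisymm ((mrk_le_encard M _).trans (by rw [encard_pair hxy])) ?_
    by_contra hlt
    have h1 : mrk M {x, y} ≤ 1 := by
      have := mrk_le_encard M {x, y}
      rw [encard_pair hxy] at this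
      obtain ⟨n, hn, hn2⟩ := enat_ex_of_le (m := 2) (x := mrk M {x, y}) (by exact_mod_cast this)
      have : n ≠ 2 := fun h => hlt (by rw [hn, h]; norm_cast)
      rw [hn]
      exact_mod_cast by omega
    have hy1 : mrk M {y} = 1 := noloop hM4 hmin hrM hy
    have : x ∈ M.closure {y} := by
      refine mem_closure_of_mrk_insert_le hx (by rw [hy1]; decide) ?_
      rw [hy1, show insert x ({y} : Set α) = {x, y} from rfl]
      exact h1
    exact hxC (M.closure_subset_closure (singleton_subset_iff.2 hyC) this)
  rcases hyAB with hyA | hyB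
  · exact key A hyA hcA
  · exact key B hyB hcB

theorem card_le3 {S : Set α} (hS : S ⊆ M.E) (hr : mrk M S ≤ 2) : S.encard ≤ 3 := by
  by_contra hlt
  have h4 : 4 ≤ S.encard := by
    rw [not_le] at hlt
    exact ENat.add_one_le_iff (by decide) |>.mpr hlt
  obtain ⟨w, hw⟩ : S.Nonempty := by
    rw [← encard_ne_zero]; intro h; rw [h] at h4; exact absurd h4 (by decide)
  have h3 : 3 ≤ (S \ {w}).encard := by
    have := encard_diff_singleton_add_one hw
    rcases le_or_gt 3 ((S \ {w}).encard) with h | h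
    · exact h
    · exfalso
      have : S.encard ≤ 3 := by
        rw [← this]
        calc (S \ {w}).encard + 1 ≤ 2 + 1 := by
              have := ENat.lt_add_one_iff (by decide : (2 : ℕ∞) ≠ ⊤) |>.mp (by
                exact lt_of_lt_of_le h (by decide))
              exact add_le_add_left this 1
          _ = 3 := by decide
      exact absurd (h4.trans this) (by decide)
  obtain ⟨T, hTsub, hT3⟩ := exists_subset_encard_eq h3
  obtain ⟨x, y, z, hxy, hxz, hyz, rfl⟩ := encard_eq_three.1 hT3
  obtain ⟨A, B, hu, hd, hA, hB, hcA, hcB⟩ := sharp hM4 hmin hrM (hS hw)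
  have hmem : ∀ p ∈ ({x, y, z} : Set α), p ∈ A ∪ B := by
    intro p hp
    have hpS : p ∈ S \ {w} := hTsub hp
    rw [hu]
    exact ⟨hS hpS.1, hpS.2⟩
  have key : ∀ p q : α, p ∈ S → q ∈ S → p ≠ q → ∀ C : Set α, w ∉ M.closure C →
      p ∈ C → q ∈ C → False := by
    intro p q hpS hqS hpq C hwC hpC hqC
    have hpq2 : mrk M {p, q} = 2 := nopara hM4 hmin hrM (hS hpS) (hS hqS) hpq
    have hins : mrk M (insert w {p, q}) ≤ mrk M {p, q} := by
      rw [hpq2]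
      exact (mrk_mono M (insert_subset hw (insert_subset hpS (by simpa using hqS)))).trans hr
    have := mem_closure_of_mrk_insert_le (hS hw) (by rw [hpq2]; decide) hins
    exact hwC (M.closure_subset_closure (insert_subset hpC (by simpa using hqC)) this)
  have hxS : x ∈ S := (hTsub (by simp)).1
  have hyS : y ∈ S := (hTsub (by simp)).1
  have hzS : z ∈ S := (hTsub (by simp)).1
  rcases hmem x (by simp) with hxA | hxB <;> rcases hmem y (by simp) with hyA | hyB <;>
    rcases hmem z (by simp) with hzA | hzB
  · exact key x y hxS hyS hxy A hcA hxA hyA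
  · exact key x y hxS hyS hxy A hcA hxA hyA
  · exact key x z hxS hzS hxz A hcA hxA hzA
  · exact key y z hyS hzS hyz B hcB hyB hzB
  · exact key y z hyS hzS hyz A hcA hyA hzA
  · exact key x z hxS hzS hxz B hcB hxB hzB
  · exact key x y hxS hyS hxy B hcB hxB hyB
  · exact key x y hxS hyS hxy B hcB hxB hyB

end RankThree

theorem partD {M : Matroid α} (hM4 : VertConn M 4)
    (hmin : ∀ e ∈ M.E, ¬ VertConn (mdel M {e}) 4)
    (hcard : 6 ≤ M.E.encard)
    (h4 : ¬ ∃ C, MCocircuit M C ∧ C.encard = 4)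
    {X Y : Set α} {a : α} (haE : a ∈ M.E) (hu : X ∪ Y = M.E \ {a}) (hd : Disjoint X Y)
    (hX : mrk M X = 2) (hY : mrk M Y = 2) (hXa : mrk M (insert a X) = 3)
    (hrM : mrank M = 3) : False := by
  classical
  have hXE : X ⊆ M.E := (hu ▸ subset_union_left).trans diff_subset
  have hYE : Y ⊆ M.E := (hu ▸ subset_union_right).trans diff_subset
  have haXY : a ∉ X ∪ Y := by rw [hu]; simp
  have haX : a ∉ X := fun h => haXY (Or.inl h)
  have haY : a ∉ Y := fun h => haXY (Or.inr h)
  have hclaX : a ∉ M.closure X := by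
    intro h
    rw [mrk_insert_of_mem_closure h, hX] at hXa
    exact absurd hXa (by decide)
  have hEeq : insert a (X ∪ Y) = M.E := by
    rw [hu, insert_diff_singleton, insert_eq_self.2 haE]
  have hencE : M.E.encard = X.encard + Y.encard + 1 := by
    rw [← hEeq, encard_insert_of_notMem haXY, encard_union_eq hd]
  obtain ⟨nX, hnX, hnX3⟩ := enat_ex_of_le (m := 3) (x := X.encard)
    (card_le3 hM4 hmin hrM hXE (by rw [hX]))
  obtain ⟨nY, hnY, hnY3⟩ := enat_ex_of_le (m := 3) (x := Y.encard)
    (card_le3 hM4 hmin hrM hYE (by rw [hY]))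
  have hnX2 : 2 ≤ nX := by
    have : (2 : ℕ∞) ≤ X.encard := hX ▸ mrk_le_encard M X
    rw [hnX] at this; exact_mod_cast this
  have hnY2 : 2 ≤ nY := by
    have : (2 : ℕ∞) ≤ Y.encard := hY ▸ mrk_le_encard M Y
    rw [hnY] at this; exact_mod_cast this
  have hsum5 : 5 ≤ nX + nY := by
    have h6 : (6 : ℕ∞) ≤ ((nX + nY + 1 : ℕ) : ℕ∞) := by
      rw [hencE, hnX, hnY] at hcard
      exact_mod_cast hcard
    have : 6 ≤ nX + nY + 1 := by exact_mod_cast h6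
    omega
  -- exclude (3,3)
  have h33 : ¬ (nX = 3 ∧ nY = 3) := by
    rintro ⟨h3X, h3Y⟩
    have YclX : ∀ y ∈ Y, y ∉ M.closure X := by
      intro y hyY hyCl
      have h1 : mrk M (insert y X) ≤ 2 := by
        rw [mrk_insert_of_mem_closure hyCl, hX]
      have h2 := card_le3 hM4 hmin hrM
        (insert_subset (hYE hyY) hXE) h1
      rw [encard_insert_of_notMem (disjoint_right.1 hd hyY), hnX, h3X] at h2
      exact absurd h2 (by decide)
    have hcompl : M.E \ M.closure X = insert a Y := by
      ext z
      constructor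
      · rintro ⟨hzE, hzCl⟩
        rw [← hEeq] at hzE
        rcases hzE with rfl | hz
        · exact mem_insert _ _
        rcases hz with hz | hz
        · exact absurd (M.subset_closure X hXE hz) hzCl
        · exact mem_insert_of_mem _ hz
      · rintro (rfl | hz)
        · exact ⟨haE, hclaX⟩
        · exact ⟨hYE hz, YclX z hz⟩
    refine h4 ⟨M.E \ M.closure X, cocirc_of_line hXE ?_ hX, ?_⟩
    · rw [← hrM]; rfl
    · rw [hcompl, encard_insert_of_notMem haY, hnY, h3Y]; decide
  have hsum : nX + nY = 5 := by omega
  have hE6 : M.E.encard = ((6 : ℕ) : ℕ∞) := by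
    rw [hencE, hnX, hnY]
    exact_mod_cast by exact_mod_cast congrArg (fun n : ℕ => ((n + 1 : ℕ) : ℕ∞)) hsum
  have hEfin : M.E.Finite := finite_of_encard_eq_coe hE6
  have hrM' : mrk M M.E = 3 := hrM
  -- every line has exactly three points
  have line3 : ∀ u v : α, u ∈ M.E → v ∈ M.E → u ≠ v → (M.closure {u, v}).encard = 3 := by
    intro u v huE hvE huv
    have hpE : ({u, v} : Set α) ⊆ M.E := insert_subset huE (by simpa using hvE)
    have hpair2 : mrk M {u, v} = 2 := nopara hM4 hmin hrM huE hvE huv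
    have hmrkL : mrk M (M.closure {u, v}) = 2 := by rw [mrk_closure_eq, hpair2]
    have hLE : M.closure {u, v} ⊆ M.E := M.closure_subset_ground _
    have hle3 := card_le3 hM4 hmin hrM hLE (by rw [hmrkL])
    rcases le_or_gt (M.closure {u, v}).encard 2 with hle2 | hgt2
    · exfalso
      have hsubp : ({u, v} : Set α) ⊆ M.closure {u, v} := M.subset_closure _ hpE
      have heq : M.closure {u, v} = ({u, v} : Set α) :=
        ((hEfin.subset hLE).eq_of_subset_of_encard_le' hsubp
          (hle2.trans (by rw [encard_pair huv]))).symm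
      have hc4 : (M.E \ M.closure {u, v}).encard = 4 := by
        rw [heq]
        have h2 := encard_diff_add_encard_of_subset hpE
        rw [encard_pair huv, hE6] at h2
        exact WithTop.add_right_cancel (by decide : (2 : ℕ∞) ≠ ⊤)
          (h2.trans (by decide : ((6 : ℕ) : ℕ∞) = 4 + 2))
      exact h4 ⟨M.E \ M.closure {u, v}, cocirc_of_line hpE hrM' hpair2, hc4⟩
    · exact le_antisymm hle3 ((ENat.add_one_le_iff (by decide : (2:ℕ∞) ≠ ⊤)).2 hgt2)
  -- third point of each line through a
  have htp : ∀ y : α, ∃ w : α, (y ∈ M.E ∧ y ≠ a) →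
      M.closure {a, y} \ {a, y} = {w} := by
    intro y
    by_cases hy : y ∈ M.E ∧ y ≠ a
    · have hay : a ≠ y := fun h => hy.2 h.symm
      have hpE : ({a, y} : Set α) ⊆ M.E := insert_subset haE (by simpa using hy.1)
      have h3 := line3 a y haE hy.1 hay
      have hsubp : ({a, y} : Set α) ⊆ M.closure {a, y} := M.subset_closure _ hpE
      have h1 : (M.closure {a, y} \ {a, y}).encard = 1 := by
        have h2 := encard_diff_add_encard_of_subset hsubp
        rw [encard_pair hay, h3] at h2
        exact WithTop.add_right_cancel (by decide : (2 : ℕ∞) ≠ ⊤)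
          (h2.trans (by decide : (3 : ℕ∞) = 1 + 2))
      obtain ⟨w, hw⟩ := encard_eq_one.1 h1
      exact ⟨w, fun _ => hw⟩
    · exact ⟨a, fun h => absurd h hy⟩
  choose f hf using htp
  set S : Set α := M.E \ {a} with hS
  have hmemS : ∀ y ∈ S, y ∈ M.E ∧ y ≠ a := fun y hy => ⟨hy.1, fun h => hy.2 (by simp [h])⟩
  have hfy_mem : ∀ y ∈ S, f y ∈ M.closure {a, y} \ {a, y} := by
    intro y hy
    rw [hf y (hmemS y hy)]
    rfl
  have hfS : ∀ y ∈ S, f y ∈ S := by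
    intro y hy
    obtain ⟨h1, h2⟩ := hfy_mem y hy
    exact ⟨M.closure_subset_ground _ h1, by
      simp only [mem_singleton_iff]
      exact fun h => h2 (by rw [h]; exact mem_insert _ _)⟩
  have hfne : ∀ y ∈ S, f y ≠ y := by
    intro y hy h
    exact (hfy_mem y hy).2 (by rw [h]; exact mem_insert_of_mem _ rfl)
  have hfinv : ∀ y ∈ S, f (f y) = y := by
    intro y hy
    obtain ⟨hyE, hya⟩ := hmemS y hy
    obtain ⟨hw1, hw2⟩ := hfy_mem y hy
    obtain ⟨hwE, hwa⟩ := hmemS (f y) (hfS y hy)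
    have haw : a ≠ f y := fun h => hwa h.symm
    have hay : a ≠ y := fun h => hya h.symm
    have hwy : f y ≠ y := hfne y hy
    have hpE : ({a, y} : Set α) ⊆ M.E := insert_subset haE (by simpa using hyE)
    have hpairy : mrk M {a, y} = 2 := nopara hM4 hmin hrM haE hyE hay
    have hpairw : mrk M {a, f y} = 2 := nopara hM4 hmin hrM haE hwE haw
    have hLE : M.closure {a, y} ⊆ M.E := M.closure_subset_ground _
    have hsubwL : ({a, f y} : Set α) ⊆ M.closure {a, y} :=
      insert_subset (M.subset_closure _ hpE (mem_insert _ _)) (by simpa using hw1)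
    have hLeq : M.closure {a, f y} = M.closure {a, y} := by
      apply subset_antisymm
      · have h1 := M.closure_subset_closure hsubwL
        rwa [Matroid.closure_closure] at h1
      · exact subset_closure_of_mrk_le hsubwL hLE
          (by rw [mrk_closure_eq, hpairy, hpairw]) (by rw [hpairw]; decide)
    have hyL : y ∈ M.closure {a, f y} := by
      rw [hLeq]
      exact M.subset_closure _ hpE (mem_insert_of_mem _ rfl)
    have hymem : y ∈ M.closure {a, f y} \ {a, f y} := by
      refine ⟨hyL, fun hmem => ?_⟩
      rcases hmem with h | h
      · exact hay h.symm
      · exact hwy (mem_singleton_iff.1 h).symm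
    rw [hf (f y) ⟨hwE, hwa⟩] at hymem
    exact (mem_singleton_iff.1 hymem).symm
  have hS5 : S.encard = 5 := by
    have h1 := encard_diff_singleton_add_one haE
    rw [hE6] at h1
    exact WithTop.add_right_cancel (by decide : (1 : ℕ∞) ≠ ⊤)
      (h1.trans (by decide : ((6 : ℕ) : ℕ∞) = 5 + 1))
  have hSfin : S.Finite := hEfin.diff
  have hSn : S.ncard = 5 := by rw [Set.ncard_def, hS5]; rfl
  exact no_fixfree_involution_odd f 5 ⟨2, rfl⟩ S hSfin hSn hfS hfinv hfne

theorem partC {M : Matroid α} (hmin : ∀ e ∈ M.E, ¬ VertConn (mdel M {e}) 4)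
    (hcard : 6 ≤ M.E.encard)
    {X Y : Set α} {a : α} (haE : a ∈ M.E) (hu : X ∪ Y = M.E \ {a}) (hd : Disjoint X Y)
    (hX : mrk M X = 1) (hY : mrk M Y = 1) (hXa : mrk M (insert a X) = 2)
    (hYa : mrk M (insert a Y) = 2) (hr' : mrk M (M.E \ {a}) = 2)
    (hrM : mrank M = 2) : False := by
  classical
  have hXE : X ⊆ M.E := (hu ▸ subset_union_left).trans diff_subset
  have hYE : Y ⊆ M.E := (hu ▸ subset_union_right).trans diff_subset
  have haXY : a ∉ X ∪ Y := by rw [hu]; simp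
  have hclaX : a ∉ M.closure X := by
    intro h
    rw [mrk_insert_of_mem_closure h, hX] at hXa
    exact absurd hXa (by decide)
  have hclaY : a ∉ M.closure Y := by
    intro h
    rw [mrk_insert_of_mem_closure h, hY] at hYa
    exact absurd hYa (by decide)
  have hXYcl : ¬ (Y ⊆ M.closure X) := by
    intro hsub
    have h1 : X ∪ Y ⊆ M.closure X :=
      union_subset (M.subset_closure X hXE) hsub
    have h2 : mrk M (X ∪ Y) ≤ 1 := by
      calc mrk M (X ∪ Y) ≤ mrk M (M.closure X) := mrk_mono M h1
        _ = 1 := by rw [mrk_closure_eq, hX]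
    rw [hu, hr'] at h2
    exact absurd h2 (by decide)
  have hencE : M.E.encard = (X ∪ Y).encard + 1 := by
    rw [← show insert a (X ∪ Y) = M.E by rw [hu, insert_diff_singleton, insert_eq_self.2 haE],
      encard_insert_of_notMem haXY]
  have hXY5 : 5 ≤ (X ∪ Y).encard := by
    by_contra hlt
    rw [not_le] at hlt
    have h1 : (X ∪ Y).encard + 1 ≤ 5 := by
      have := ENat.lt_add_one_iff (by decide : (4:ℕ∞) ≠ ⊤) |>.mp (lt_of_lt_of_le hlt (by decide))
      calc (X ∪ Y).encard + 1 ≤ 4 + 1 := add_le_add_left this 1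
        _ = 5 := by decide
    rw [← hencE] at h1
    exact absurd (hcard.trans h1) (by decide)
  set P : Set α := {x | x ∈ X ∧ mrk M (X \ {x}) = 0} with hP
  set Q : Set α := {y | y ∈ Y ∧ Y \ {y} ⊆ M.closure X} with hQ
  have hPsub : P.Subsingleton := by
    intro x1 h1 x2 h2
    by_contra hne
    have hcov : X ⊆ (X \ {x1}) ∪ (X \ {x2}) := by
      intro z hz
      rcases eq_or_ne z x1 with rfl | hz1
      · exact Or.inr ⟨hz, by simpa using hne⟩
      · exact Or.inl ⟨hz, by simpa using hz1⟩
    have : mrk M X ≤ 0 := by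
      calc mrk M X ≤ mrk M ((X \ {x1}) ∪ (X \ {x2})) := mrk_mono M hcov
        _ ≤ mrk M (X \ {x1}) + mrk M (X \ {x2}) := mrk_union_le M _ _
        _ = 0 := by rw [h1.2, h2.2]; rfl
    rw [hX] at this
    exact absurd this (by decide)
  have hQsub : Q.Subsingleton := by
    intro y1 h1 y2 h2
    by_contra hne
    refine hXYcl fun z hz => ?_
    rcases eq_or_ne z y1 with rfl | hz1
    · exact h2.2 ⟨hz, by simpa using hne⟩
    · exact h1.2 ⟨hz, by simpa using hz1⟩
  have hPQ2 : (P ∪ Q).encard ≤ 2 := by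
    calc (P ∪ Q).encard ≤ P.encard + Q.encard := encard_union_le P Q
      _ ≤ 1 + 1 := add_le_add (encard_le_one_iff.2 fun a b ha hb => hPsub ha hb)
        (encard_le_one_iff.2 fun a b ha hb => hQsub ha hb)
      _ = 2 := by decide
  have hnsub : ¬ (X ∪ Y ⊆ P ∪ Q) := by
    intro hsub
    have := (encard_mono hsub).trans hPQ2
    exact absurd (hXY5.trans this) (by decide)
  obtain ⟨e, heXY, hePQ⟩ := not_subset.1 hnsub
  have heE : e ∈ M.E := (hu ▸ heXY : e ∈ M.E \ {a}).1
  have hea : e ≠ a := by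
    have : e ∈ M.E \ {a} := hu ▸ heXY
    simpa using this.2
  -- find u
  have hXe1 : mrk M (X \ {e}) = 1 := by
    rcases heXY with heX | heY
    · have : ¬ (mrk M (X \ {e}) = 0) := fun h0 => hePQ (Or.inl ⟨heX, h0⟩)
      refine le_antisymm ((mrk_mono M diff_subset).trans (by rw [hX])) ?_
      exact one_le_mrk_of_mrk_ne_zero this
    · rw [diff_singleton_eq_self (disjoint_right.1 hd heY)]
      exact hX
  obtain ⟨I, hI⟩ := M.exists_isBasis' (X \ {e})
  have hIcard : I.encard = 1 := by rw [← mrk_eq_of_basis' hI, hXe1]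
  obtain ⟨u, rfl⟩ := encard_eq_one.1 hIcard
  have huXe : u ∈ X \ {e} := hI.subset rfl
  have hu1 : mrk M {u} = 1 :=
    le_antisymm (mrk_singleton_le M u) (by simpa using indep_le_mrk hI.indep Subset.rfl)
  -- find v
  have hvex : ∃ v, v ∈ Y \ {e} ∧ v ∉ M.closure X := by
    rcases heXY with heX | heY
    · obtain ⟨v, hvY, hvcl⟩ := not_subset.1 hXYcl
      exact ⟨v, ⟨hvY, by simpa using fun h : v = e => disjoint_right.1 hd hvY (h ▸ heX)⟩, hvcl⟩
    · have : ¬ (Y \ {e} ⊆ M.closure X) := fun h => hePQ (Or.inr ⟨heY, h⟩)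
      obtain ⟨v, hvY, hvcl⟩ := not_subset.1 this
      exact ⟨v, hvY, hvcl⟩
  obtain ⟨v, ⟨hvY, hve⟩, hvcl⟩ := hvex
  have hvE : v ∈ M.E := hYE hvY
  have hv1 : mrk M {v} = 1 := by
    refine le_antisymm (mrk_singleton_le M v) (one_le_mrk_of_mrk_ne_zero fun h0 => ?_)
    exact hvcl (loop_mem_closure hvE h0)
  have hcluX : M.closure {u} ⊆ M.closure X :=
    M.closure_subset_closure (singleton_subset_iff.2 huXe.1)
  have hclvY : M.closure {v} ⊆ M.closure Y :=
    M.closure_subset_closure (singleton_subset_iff.2 hvY)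
  have hmrkua : mrk M (insert a {u}) = 2 := by
    rw [mrk_insert_of_not_mem_closure haE (fun h => hclaX (hcluX h)), hu1]; rfl
  have hmrkuv : mrk M (insert v {u}) = 2 := by
    rw [mrk_insert_of_not_mem_closure hvE (fun h => hvcl (hcluX h)), hu1]; rfl
  have hmrkva : mrk M (insert a {v}) = 2 := by
    rw [mrk_insert_of_not_mem_closure haE (fun h => hclaY (hclvY h)), hv1]; rfl
  -- M \ e is vertically 4-connected
  refine hmin e heE fun j A B hj0 hj4 hsep => ?_
  obtain ⟨huAB, hdAB, hlt, hjA, hjB⟩ := hsep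
  have hgr : (mdel M {e}).E = M.E \ {e} := rfl
  rw [hgr] at huAB
  have hAs : A ⊆ M.E \ {e} := huAB ▸ subset_union_left
  have hBs : B ⊆ M.E \ {e} := huAB ▸ subset_union_right
  have hrA : mrk (mdel M {e}) A = mrk M A := mrk_restrict M hAs
  have hrB : mrk (mdel M {e}) B = mrk M B := mrk_restrict M hBs
  have hins_ue : insert a {u} ⊆ M.E \ {e} := by
    refine insert_subset ⟨haE, by simpa using hea.symm⟩ ?_
    simpa using ⟨hXE huXe.1, fun h : u = e => (huXe.2 (by simpa using h))⟩
  have hrdel2 : mrk M (M.E \ {e}) = 2 := by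
    refine le_antisymm ((mrk_mono M diff_subset).trans (by rw [← hrM]; exact le_rfl)) ?_
    rw [← hmrkua]
    exact mrk_mono M hins_ue
  have hrk2 : mrank (mdel M {e}) = ((2:ℕ):ℕ∞) := by
    have h' : mrk (mdel M {e}) (M.E \ {e}) = mrk M (M.E \ {e}) := mrk_restrict M Subset.rfl
    unfold mrank
    rw [hgr, h', hrdel2]
    norm_cast
  have hcompl : (mdel M {e}).E \ A = B := by rw [hgr]; exact compl_of_partition huAB hdAB
  obtain ⟨nA, hnA, hnA2⟩ := enat_ex_of_le (m := 2) (x := mrk M A)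
    (by rw [show ((2:ℕ):ℕ∞) = 2 by norm_cast, ← hrM]; exact mrk_mono M (hAs.trans diff_subset))
  obtain ⟨nB, hnB, hnB2⟩ := enat_ex_of_le (m := 2) (x := mrk M B)
    (by rw [show ((2:ℕ):ℕ∞) = 2 by norm_cast, ← hrM]; exact mrk_mono M (hBs.trans diff_subset))
  have hlam : lam (mdel M {e}) A = ((nA + nB - 2 : ℕ) : ℕ∞) := by
    rw [lam, hcompl, hrA, hrB, hnA, hnB, hrk2, ← Nat.cast_add, enat_coe_sub]
  rw [hlam] at hlt
  have hlt' : nA + nB - 2 < j := by exact_mod_cast hlt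
  have hjA' : j ≤ nA := by rw [hrA, hnA] at hjA; exact_mod_cast hjA
  have hjB' : j ≤ nB := by rw [hrB, hnB] at hjB; exact_mod_cast hjB
  have hval : nA = 1 ∧ nB = 1 := by omega
  have hA1 : mrk M A ≤ 1 := by rw [hnA, hval.1]; norm_cast
  have hB1 : mrk M B ≤ 1 := by rw [hnB, hval.2]; norm_cast
  have key : ∀ (p q : α) (C : Set α), mrk M C ≤ 1 → p ∈ C → q ∈ C →
      mrk M {p} = 1 → q ∈ M.E → q ∉ M.closure {p} → False := by
    intro p q C hC hpC hqC hp1 hqE hqcl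
    have h2 : mrk M (insert q {p}) = 2 := by
      rw [mrk_insert_of_not_mem_closure hqE hqcl, hp1]; rfl
    have := (mrk_mono M (insert_subset hqC (singleton_subset_iff.2 hpC))).trans hC
    rw [h2] at this
    exact absurd this (by decide)
  have hmemu : u ∈ A ∪ B := by
    rw [huAB]
    exact hins_ue (by simp)
  have hmema : a ∈ A ∪ B := by
    rw [huAB]
    exact ⟨haE, by simpa using hea.symm⟩
  have hmemv : v ∈ A ∪ B := by
    rw [huAB]
    exact ⟨hvE, by simpa using hve⟩
  have hka : ∀ C : Set α, mrk M C ≤ 1 → u ∈ C → a ∈ C → False :=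
    fun C hC h1 h2 => key u a C hC h1 h2 hu1 haE (fun h => hclaX (hcluX h))
  have hkv : ∀ C : Set α, mrk M C ≤ 1 → u ∈ C → v ∈ C → False :=
    fun C hC h1 h2 => key u v C hC h1 h2 hu1 hvE (fun h => hvcl (hcluX h))
  have hkva : ∀ C : Set α, mrk M C ≤ 1 → v ∈ C → a ∈ C → False :=
    fun C hC h1 h2 => key v a C hC h1 h2 hv1 haE (fun h => hclaY (hclvY h))
  rcases hmemu with huA | huB <;> rcases hmemv with hvA | hvB <;> rcases hmema with haA | haB
  · exact hkv A hA1 huA hvA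
  · exact hkv A hA1 huA hvA
  · exact hka A hA1 huA haA
  · exact hkva B hB1 hvB haB
  · exact hkva A hA1 hvA haA
  · exact hka B hB1 huB haB
  · exact hkv B hB1 huB hvB
  · exact hkv B hB1 huB hvB

/-- If `M` is minimally vertically 4-connected with at least six elements, no 4-element
cocircuit and no 5-element cocircuit containing a triangle, then no deletion `M \ a` has an
exact vertical `j`-separation with `j ∈ {1,2}`. -/
theorem statement_14 (M : Matroid α) (hM : MinVertConn4 M) (hcard : 6 ≤ M.E.encard)
    (h4 : ¬ ∃ C, MCocircuit M C ∧ C.encard = 4)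
    (h5 : ¬ ∃ C, MCocircuit M C ∧ C.encard = 5 ∧ ∃ T ⊆ C, IsTriangle M T) :
    ¬ ∃ a ∈ M.E, ∃ j, (j = 1 ∨ j = 2) ∧ ∃ X Y, IsExactVSep (mdel M {a}) j X Y := by
  obtain ⟨hM4, hmin⟩ := hM
  rintro ⟨a, haE, j, hj, X, Y, ⟨⟨huXY, hdXY, hlt, hjX, hjY⟩, hexact⟩⟩
  have hgr : (mdel M {a}).E = M.E \ {a} := rfl
  rw [hgr] at huXY
  have hXs : X ⊆ M.E \ {a} := huXY ▸ subset_union_left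
  have hYs : Y ⊆ M.E \ {a} := huXY ▸ subset_union_right
  have hXE : X ⊆ M.E := hXs.trans diff_subset
  have hYE : Y ⊆ M.E := hYs.trans diff_subset
  have hrX : mrk (mdel M {a}) X = mrk M X := mrk_restrict M hXs
  have hrY : mrk (mdel M {a}) Y = mrk M Y := mrk_restrict M hYs
  have hr'eq : mrank (mdel M {a}) = mrk M (M.E \ {a}) := by
    have h' : mrk (mdel M {a}) (M.E \ {a}) = mrk M (M.E \ {a}) := mrk_restrict M Subset.rfl
    unfold mrank
    rw [hgr, h']
  have hcompl' : (mdel M {a}).E \ X = Y := by rw [hgr]; exact compl_of_partition huXY hdXY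
  have hlam' : lam (mdel M {a}) X = mrk M X + mrk M Y - mrk M (M.E \ {a}) := by
    rw [lam, hcompl', hrX, hrY, hr'eq]
  have haXY : a ∉ X ∪ Y := by rw [huXY]; simp
  have haX : a ∉ X := fun h => haXY (Or.inl h)
  have haY : a ∉ Y := fun h => haXY (Or.inr h)
  have hEeq : insert a (X ∪ Y) = M.E := by
    rw [huXY, insert_diff_singleton, insert_eq_self.2 haE]
  have hEX : M.E \ X = insert a Y := by
    ext z
    constructor
    · rintro ⟨hzE, hzX⟩
      rw [← hEeq] at hzE
      rcases hzE with rfl | hz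
      · exact mem_insert _ _
      rcases hz with hz | hz
      · exact absurd hz hzX
      · exact mem_insert_of_mem _ hz
    · rintro (rfl | hz)
      · exact ⟨haE, haX⟩
      · exact ⟨hYE hz, disjoint_right.1 hdXY hz⟩
  have hEY : M.E \ Y = insert a X := by
    ext z
    constructor
    · rintro ⟨hzE, hzY⟩
      rw [← hEeq] at hzE
      rcases hzE with rfl | hz
      · exact mem_insert _ _
      rcases hz with hz | hz
      · exact mem_insert_of_mem _ hz
      · exact absurd hz hzY
    · rintro (rfl | hz)
      · exact ⟨haE, haY⟩
      · exact ⟨hXE hz, disjoint_left.1 hdXY hz⟩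
  have hEXa : M.E \ insert a X = Y := by
    ext z
    constructor
    · rintro ⟨hzE, hzX⟩
      rw [← hEeq] at hzE
      rcases hzE with rfl | hz
      · exact absurd (mem_insert _ _) hzX
      rcases hz with hz | hz
      · exact absurd (mem_insert_of_mem _ hz) hzX
      · exact hz
    · intro hz
      refine ⟨hYE hz, ?_⟩
      rintro (rfl | h)
      · exact haY hz
      · exact disjoint_left.1 hdXY h hz
  have hEYa : M.E \ insert a Y = X := by
    ext z
    constructor
    · rintro ⟨hzE, hzY⟩
      rw [← hEeq] at hzE
      rcases hzE with rfl | hz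
      · exact absurd (mem_insert _ _) hzY
      rcases hz with hz | hz
      · exact hz
      · exact absurd (mem_insert_of_mem _ hz) hzY
    · intro hz
      refine ⟨hXE hz, ?_⟩
      rintro (rfl | h)
      · exact haX hz
      · exact disjoint_right.1 hdXY h hz
  have hUXaY : X ∪ insert a Y = M.E := by rw [union_insert, hEeq]
  have hUaXY : insert a X ∪ Y = M.E := by rw [insert_union, hEeq]
  have hDXaY : Disjoint X (insert a Y) := disj_insert_right haX hdXY
  have hDaXY : Disjoint (insert a X) Y := disj_insert_left haY hdXY
  have hr'le : mrk M (M.E \ {a}) ≤ mrank M := mrk_mono M diff_subset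
  have hrMle : mrank M ≤ mrk M (M.E \ {a}) + 1 := by
    calc mrank M = mrk M (insert a (M.E \ {a})) := by
          rw [insert_diff_singleton, insert_eq_self.2 haE]; rfl
      _ ≤ mrk M (M.E \ {a}) + 1 := mrk_insert_le M a _
  rw [hrX] at hjX
  rw [hrY] at hjY
  rw [hlam'] at hexact
  rcases hj with rfl | rfl
  -- case j = 1
  · have hle : mrk M X + mrk M Y ≤ mrk M (M.E \ {a}) := by
      rw [show ((1:ℕ):ℕ∞) - 1 = 0 by decide] at hexact
      exact tsub_eq_zero_iff_le.1 hexact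
    have h1X : (1:ℕ∞) ≤ mrk M X := by exact_mod_cast hjX
    have h1Y : (1:ℕ∞) ≤ mrk M Y := by exact_mod_cast hjY
    by_cases hs1 : mrk M X + mrk M (insert a Y) ≤ mrank M
    · refine hM4 1 X (insert a Y) one_pos (by norm_num) ⟨hUXaY, hDXaY, ?_, ?_, ?_⟩
      · rw [lam, hEX, tsub_eq_zero_of_le hs1]
        exact_mod_cast zero_lt_one
      · exact_mod_cast h1X
      · exact_mod_cast h1Y.trans (mrk_mono M (subset_insert a Y))
    by_cases hs2 : mrk M (insert a X) + mrk M Y ≤ mrank M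
    · refine hM4 1 (insert a X) Y one_pos (by norm_num) ⟨hUaXY, hDaXY, ?_, ?_, ?_⟩
      · rw [lam, hEXa, tsub_eq_zero_of_le hs2]
        exact_mod_cast zero_lt_one
      · exact_mod_cast h1X.trans (mrk_mono M (subset_insert a X))
      · exact_mod_cast h1Y
    have hgt1 := not_le.1 hs1
    have hgt2 := not_le.1 hs2
    have hMTop : mrank M ≠ ⊤ := fun h => absurd (h ▸ hgt1) not_top_lt
    obtain ⟨nM, hnM⟩ := enat_ex hMTop
    have hfin : ∀ Z : Set α, Z ⊆ M.E → ∃ n : ℕ, mrk M Z = n ∧ n ≤ nM := fun Z hZ =>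
      enat_ex_of_le (m := nM) (by rw [← hnM]; exact mrk_mono M hZ)
    obtain ⟨nX, hnX, _⟩ := hfin X hXE
    obtain ⟨nY, hnY, _⟩ := hfin Y hYE
    obtain ⟨nXa, hnXa, _⟩ := hfin (insert a X) (insert_subset haE hXE)
    obtain ⟨nYa, hnYa, _⟩ := hfin (insert a Y) (insert_subset haE hYE)
    obtain ⟨nr, hnr, _⟩ := hfin (M.E \ {a}) diff_subset
    have e1 : nX + nY ≤ nr := by
      rw [hnX, hnY, hnr, ← Nat.cast_add] at hle; exact_mod_cast hle
    have e2 : nr ≤ nM := by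
      rw [hnr, hnM] at hr'le; exact_mod_cast hr'le
    have e3 : nM ≤ nr + 1 := by
      rw [hnr, hnM] at hrMle; exact_mod_cast hrMle
    have e4 : nYa ≤ nY + 1 := by
      have := mrk_insert_le M a Y
      rw [hnY, hnYa] at this; exact_mod_cast this
    have e5 : nXa ≤ nX + 1 := by
      have := mrk_insert_le M a X
      rw [hnX, hnXa] at this; exact_mod_cast this
    have e6 : nM < nX + nYa := by
      rw [hnX, hnYa, hnM, ← Nat.cast_add] at hgt1; exact_mod_cast hgt1
    have e9 : nM < nXa + nY := by
      rw [hnXa, hnY, hnM, ← Nat.cast_add] at hgt2; exact_mod_cast hgt2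
    have e7 : 1 ≤ nX := by rw [hnX] at h1X; exact_mod_cast h1X
    have e7' : 1 ≤ nY := by rw [hnY] at h1Y; exact_mod_cast h1Y
    by_cases h2X : 2 ≤ nX
    · refine hM4 2 X (insert a Y) (by norm_num) (by norm_num) ⟨hUXaY, hDXaY, ?_, ?_, ?_⟩
      · rw [lam_eq_coe hEX hnX hnYa hnM]
        exact_mod_cast by omega
      · rw [hnX]; exact_mod_cast h2X
      · rw [hnYa]; exact_mod_cast by omega
    by_cases h2Y : 2 ≤ nY
    · refine hM4 2 (insert a X) Y (by norm_num) (by norm_num) ⟨hUaXY, hDaXY, ?_, ?_, ?_⟩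
      · rw [lam_eq_coe hEXa hnXa hnY hnM]
        exact_mod_cast by omega
      · rw [hnXa]; exact_mod_cast by omega
      · rw [hnY]; exact_mod_cast h2Y
    refine partC hmin hcard haE huXY hdXY ?_ ?_ ?_ ?_ ?_ ?_
    · rw [hnX, show nX = 1 by omega]; norm_cast
    · rw [hnY, show nY = 1 by omega]; norm_cast
    · rw [hnXa, show nXa = 2 by omega]; norm_cast
    · rw [hnYa, show nYa = 2 by omega]; norm_cast
    · rw [hnr, show nr = 2 by omega]; norm_cast
    · rw [hnM, show nM = 2 by omega]; norm_cast
  -- case j = 2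
  · have h2X : (2:ℕ∞) ≤ mrk M X := by exact_mod_cast hjX
    have h2Y : (2:ℕ∞) ≤ mrk M Y := by exact_mod_cast hjY
    have hlam1 : mrk M X + mrk M Y - mrk M (M.E \ {a}) = 1 := by
      rw [hexact]; decide
    have hlt1 : mrk M (M.E \ {a}) < mrk M X + mrk M Y := by
      by_contra hc
      rw [not_lt] at hc
      rw [tsub_eq_zero_of_le hc] at hlam1
      exact absurd hlam1 (by decide)
    have hle1 : mrk M X + mrk M Y ≤ mrk M (M.E \ {a}) + 1 := by
      have h := hlam1.le
      rw [tsub_le_iff_right] at h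
      exact h.trans_eq (add_comm 1 _)
    have hrTop : mrk M (M.E \ {a}) ≠ ⊤ := fun h => absurd (h ▸ hlt1) not_top_lt
    have hMTop : mrank M ≠ ⊤ := by
      obtain ⟨n, hn⟩ := enat_ex hrTop
      intro h
      rw [h, hn] at hrMle
      rw [show ((n:ℕ∞) + 1) = ((n + 1 : ℕ) : ℕ∞) by push_cast; ring] at hrMle
      exact ENat.coe_ne_top (n + 1) (top_le_iff.1 hrMle)
    obtain ⟨nM, hnM⟩ := enat_ex hMTop
    have hfin : ∀ Z : Set α, Z ⊆ M.E → ∃ n : ℕ, mrk M Z = n ∧ n ≤ nM := fun Z hZ =>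
      enat_ex_of_le (m := nM) (by rw [← hnM]; exact mrk_mono M hZ)
    obtain ⟨nX, hnX, _⟩ := hfin X hXE
    obtain ⟨nY, hnY, _⟩ := hfin Y hYE
    obtain ⟨nXa, hnXa, _⟩ := hfin (insert a X) (insert_subset haE hXE)
    obtain ⟨nYa, hnYa, _⟩ := hfin (insert a Y) (insert_subset haE hYE)
    obtain ⟨nr, hnr, _⟩ := hfin (M.E \ {a}) diff_subset
    have f1 : nr < nX + nY := by
      rw [hnX, hnY, hnr, ← Nat.cast_add] at hlt1; exact_mod_cast hlt1
    have f2 : nX + nY ≤ nr + 1 := by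
      rw [hnX, hnY, hnr, ← Nat.cast_add] at hle1; exact_mod_cast hle1
    have e2 : nr ≤ nM := by
      rw [hnr, hnM] at hr'le; exact_mod_cast hr'le
    have e3 : nM ≤ nr + 1 := by
      rw [hnr, hnM] at hrMle; exact_mod_cast hrMle
    have e4 : nYa ≤ nY + 1 := by
      have := mrk_insert_le M a Y
      rw [hnY, hnYa] at this; exact_mod_cast this
    have e5 : nXa ≤ nX + 1 := by
      have := mrk_insert_le M a X
      rw [hnX, hnXa] at this; exact_mod_cast this
    have e8 : nY ≤ nYa := by
      have := mrk_mono M (subset_insert a Y)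
      rw [hnY, hnYa] at this; exact_mod_cast this
    have e8' : nX ≤ nXa := by
      have := mrk_mono M (subset_insert a X)
      rw [hnX, hnXa] at this; exact_mod_cast this
    have g2X : 2 ≤ nX := by rw [hnX] at h2X; exact_mod_cast h2X
    have g2Y : 2 ≤ nY := by rw [hnY] at h2Y; exact_mod_cast h2Y
    by_cases hc1 : nX + nYa - nM < 2
    · refine hM4 2 X (insert a Y) (by norm_num) (by norm_num) ⟨hUXaY, hDXaY, ?_, ?_, ?_⟩
      · rw [lam_eq_coe hEX hnX hnYa hnM]
        exact_mod_cast hc1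
      · rw [hnX]; exact_mod_cast g2X
      · rw [hnYa]; exact_mod_cast by omega
    by_cases hc2 : nXa + nY - nM < 2
    · refine hM4 2 (insert a X) Y (by norm_num) (by norm_num) ⟨hUaXY, hDaXY, ?_, ?_, ?_⟩
      · rw [lam_eq_coe hEXa hnXa hnY hnM]
        exact_mod_cast hc2
      · rw [hnXa]; exact_mod_cast by omega
      · rw [hnY]; exact_mod_cast g2Y
    by_cases h3Y : 3 ≤ nY
    · refine hM4 3 (insert a X) Y (by norm_num) (by norm_num) ⟨hUaXY, hDaXY, ?_, ?_, ?_⟩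
      · rw [lam_eq_coe hEXa hnXa hnY hnM]
        exact_mod_cast by omega
      · rw [hnXa]; exact_mod_cast by omega
      · rw [hnY]; exact_mod_cast h3Y
    by_cases h3X : 3 ≤ nX
    · refine hM4 3 X (insert a Y) (by norm_num) (by norm_num) ⟨hUXaY, hDXaY, ?_, ?_, ?_⟩
      · rw [lam_eq_coe hEX hnX hnYa hnM]
        exact_mod_cast by omega
      · rw [hnX]; exact_mod_cast h3X
      · rw [hnYa]; exact_mod_cast by omega
    refine partD hM4 hmin hcard h4 haE huXY hdXY ?_ ?_ ?_ ?_
    · rw [hnX, show nX = 2 by omega]; norm_cast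
    · rw [hnY, show nY = 2 by omega]; norm_cast
    · rw [hnXa, show nXa = 3 by omega]; norm_cast
    · rw [hnM, show nM = 3 by omega]; norm_cast
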